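/- The subgroup Γ_{n,d} = C_n ≀_{V_d} (C_d ∗ C_d) of G_{n,d} acts freely and transitively on the vertices of the graph X_{n,d}, where C_d ∗ C_d acts on T_d as its Bass–Serre tree with one orbit of edges and C_n ≤ 𝔖_n is the cyclic group generated by the n-cycle (0,1,…,n−1). -/

import Mathlib

namespace LampLighterGraph

variable {V : Type*} (T : SimpleGraph V) {n : ℕ} [NeZero n]

/-- A permutation of the vertices is an automorphism of `T` if it preserves adjacency. -/
def IsGraphAut (g : Equiv.Perm V) : Prop :=
  ∀ u w : V, T.Adj (g u) (g w) ↔ T.Adj u w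

def Adj1 (x y : (V →₀ Fin n) × T.edgeSet) : Prop :=
  x.1 = y.1 ∧ x.2 ≠ y.2 ∧ ∃ v : V, v ∈ (x.2 : Sym2 V) ∧ v ∈ (y.2 : Sym2 V)

def Adj2 (x y : (V →₀ Fin n) × T.edgeSet) : Prop :=
  x.2 = y.2 ∧ ∃ v : V, v ∈ (x.2 : Sym2 V) ∧ x.1 v ≠ y.1 v ∧ ∀ w : V, w ≠ v → x.1 w = y.1 w

/-- The action of an element `((σ_v), γ)` of the semi-restricted wreath product
`𝔖_n ≀^{𝔖_{n-1}}_{V_d} Aut(T_d)` on finitely supported functions: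
`f ↦ (v ↦ σ_v (f (γ⁻¹ v)))`. -/
noncomputable def wreathActFun (σf : V → Equiv.Perm (Fin n))
    (hσ : {v : V | σf v 0 ≠ 0}.Finite) (γ : Equiv.Perm V) (f : V →₀ Fin n) :
    V →₀ Fin n :=
  Finsupp.ofSupportFinite (fun v => σf v (f (γ⁻¹ v))) (by
    apply Set.Finite.subset (hσ.union ((f.support.finite_toSet).image γ))
    intro v hv
    simp only [Function.mem_support] at hv
    by_contra hc
    simp only [Set.mem_union, Set.mem_setOf_eq, not_or, not_not] at hc
    obtain ⟨h1, h2⟩ := hc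
    have hf : f (γ⁻¹ v) = 0 := by
      by_contra hf
      exact h2 ⟨γ⁻¹ v, by simpa using hf, by simp⟩
    exact hv (by rw [hf, h1]))

/-- The action of a tree automorphism on the edges of the tree. -/
def edgeMap (γ : Equiv.Perm V) (hγ : IsGraphAut T γ) (e : T.edgeSet) : T.edgeSet :=
  ⟨Sym2.map γ e.1, by
    obtain ⟨e, he⟩ := e
    induction e with
    | _ u w => simpa using (hγ u w).mpr he⟩

/-- The action of an element `((σ_v), γ)` of `G_{n,d}` on a vertex `(f, e)` of the
graph `X_{n,d}`:  `((σ_v), γ) · (f, e) = ((σ_v · f_{γ⁻¹ v}), γ e)`. -/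
noncomputable def wreathAct (σf : V → Equiv.Perm (Fin n))
    (hσ : {v : V | σf v 0 ≠ 0}.Finite) (γ : Equiv.Perm V) (hγ : IsGraphAut T γ)
    (x : (V →₀ Fin n) × T.edgeSet) : (V →₀ Fin n) × T.edgeSet :=
  (wreathActFun σf hσ γ x.1, edgeMap T γ hγ x.2)


open Fin.NatCast Fin.CommRing in
/-- The subgroup `Γ_{n,d} = C_n ≀_{V_d} (C_d ∗ C_d)` of `G_{n,d}` acts
freely and transitively on the vertices of the graph `X_{n,d}`. Here `C_d ∗ C_d`
(a group `Q` isomorphic to the free product of two cyclic groups of order `d`)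
acts on the tree `T_d` as its Bass–Serre tree, i.e. by automorphisms acting freely
transitively on the edge set, and `C_n ≤ 𝔖_n` is the cyclic subgroup generated by
the `n`-cycle `c0 = (0,1,…,n-1)`.  Elements of `Γ_{n,d}` are pairs `((σ_v), g)`
with `σ_v ∈ C_n` for all `v`, `σ_v = 1` almost everywhere, and `g ∈ Q`, acting via
`((σ_v), g) · ((f_v), e) = ((σ_v · f_{g⁻¹ v}), g e)`. -/

lemma c0_pow_apply {n : ℕ} [NeZero n] (c0 : Equiv.Perm (Fin n))
    (hc0 : ∀ i : Fin n, c0 i = i + 1) (k : ℕ) (i : Fin n) :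
    (c0 ^ k) i = i + (k : Fin n) := by
  induction k with
  | zero => simp
  | succ k ih =>
    rw [pow_succ', Equiv.Perm.mul_apply, hc0, ih]
    push_cast
    ring

open Fin.NatCast in
lemma zpowers_eq_of_apply_eq {n : ℕ} [NeZero n] (c0 : Equiv.Perm (Fin n))
    (hc0 : ∀ i : Fin n, c0 i = i + 1) {a b : Equiv.Perm (Fin n)}
    (ha : a ∈ Subgroup.zpowers c0) (hb : b ∈ Subgroup.zpowers c0)
    {i : Fin n} (h : a i = b i) : a = b := by
  obtain ⟨k, rfl⟩ := (mem_powers_iff_mem_zpowers).mpr ha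
  obtain ⟨l, rfl⟩ := (mem_powers_iff_mem_zpowers).mpr hb
  rw [c0_pow_apply c0 hc0, c0_pow_apply c0 hc0] at h
  have hkl : (k : Fin n) = (l : Fin n) := add_left_cancel h
  ext j
  rw [c0_pow_apply c0 hc0, c0_pow_apply c0 hc0, hkl]

theorem lamplighter_lattice_free_transitive {V : Type*} (T : SimpleGraph V)
    (hT : T.IsTree) (d : ℕ) {n : ℕ} (hd : 3 ≤ d) (hn : 2 ≤ n) [NeZero n]
    (c0 : Equiv.Perm (Fin n)) (hc0 : ∀ i : Fin n, c0 i = i + 1)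
    (Q : Type*) [Group Q]
    (hQ : Nonempty (Q ≃* Monoid.Coprod (Multiplicative (ZMod d)) (Multiplicative (ZMod d))))
    (ψ : Q →* Equiv.Perm V) (haut : ∀ g : Q, IsGraphAut T (ψ g))
    (hfreeEdges : ∀ e e' : T.edgeSet, ∃! g : Q, edgeMap T (ψ g) (haut g) e = e') :
    ∀ x y : (V →₀ Fin n) × T.edgeSet,
      (∃ (σf : V → Equiv.Perm (Fin n)) (g : Q)
        (_ : ∀ v : V, σf v ∈ Subgroup.zpowers c0) (_ : {v : V | σf v ≠ 1}.Finite)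
        (hσ : {v : V | σf v 0 ≠ 0}.Finite),
        wreathAct T σf hσ (ψ g) (haut g) x = y) ∧
      (∀ (σf σf' : V → Equiv.Perm (Fin n)) (g g' : Q),
        (∀ v : V, σf v ∈ Subgroup.zpowers c0) → (∀ v : V, σf' v ∈ Subgroup.zpowers c0) →
        {v : V | σf v ≠ 1}.Finite → {v : V | σf' v ≠ 1}.Finite →
        ∀ (hσ : {v : V | σf v 0 ≠ 0}.Finite) (hσ' : {v : V | σf' v 0 ≠ 0}.Finite),
        wreathAct T σf hσ (ψ g) (haut g) x = y →
        wreathAct T σf' hσ' (ψ g') (haut g') x = y → σf = σf' ∧ g = g') := by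
  intro x y
  obtain ⟨f, e⟩ := x
  obtain ⟨f', e'⟩ := y
  obtain ⟨g0, hg0, hg0uniq⟩ := hfreeEdges e e'
  constructor
  · set γ : Equiv.Perm V := ψ g0 with hγdef
    set m : V → Fin n := fun v => f' v - f (γ⁻¹ v) with hm
    set σf : V → Equiv.Perm (Fin n) := fun v => c0 ^ (m v).val with hσf
    have hmem : ∀ v : V, σf v ∈ Subgroup.zpowers c0 := fun v =>
      Subgroup.pow_mem _ (Subgroup.mem_zpowers c0) _
    have hfin1 : {v : V | σf v ≠ 1}.Finite := by
      apply Set.Finite.subset ((f'.support.finite_toSet).union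
        ((f.support.finite_toSet).image γ))
      intro v hv
      simp only [Set.mem_setOf_eq] at hv
      by_contra hc
      simp only [Set.mem_union, Finset.mem_coe, Finsupp.mem_support_iff, not_or, not_not,
        Set.mem_image] at hc
      obtain ⟨h1, h2⟩ := hc
      have hf : f (γ⁻¹ v) = 0 := by
        by_contra hf
        exact h2 ⟨γ⁻¹ v, hf, by simp⟩
      apply hv
      have : m v = 0 := by simp [hm, h1]; exact hf
      simp [hσf, this]
    have hσ : {v : V | σf v 0 ≠ 0}.Finite := by
      apply hfin1.subset
      intro v hv
      simp only [Set.mem_setOf_eq] at hv ⊢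
      intro h1
      exact hv (by rw [h1]; rfl)
    refine ⟨σf, g0, hmem, hfin1, hσ, ?_⟩
    unfold wreathAct
    refine Prod.ext ?_ hg0
    refine Finsupp.ext fun v => ?_
    show σf v (f (γ⁻¹ v)) = f' v
    rw [hσf]
    simp only
    rw [c0_pow_apply c0 hc0, Fin.cast_val_eq_self, hm]
    simp
  · intro σf σf' g g' hmem hmem' _ _ hσ hσ' h h'
    have hg : g = g0 := hg0uniq g (congrArg Prod.snd h)
    have hg' : g' = g0 := hg0uniq g' (congrArg Prod.snd h')
    rw [hg] at h
    rw [hg'] at h'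
    refine ⟨?_, hg.trans hg'.symm⟩
    have h1 := congrArg Prod.fst h
    have h1' := congrArg Prod.fst h'
    funext v
    refine zpowers_eq_of_apply_eq c0 hc0 (hmem v) (hmem' v)
      (i := f ((ψ g0)⁻¹ v)) ?_
    have e1 : σf v (f ((ψ g0)⁻¹ v)) = f' v := by
      have := congrFun (congrArg (DFunLike.coe) h1) v
      exact this
    have e2 : σf' v (f ((ψ g0)⁻¹ v)) = f' v := by
      have := congrFun (congrArg (DFunLike.coe) h1') v
      exact this
    rw [e1, e2]


end LampLighterGraph
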